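/- Let aᵢ, bᵢ : ℝ → ℂ (i = 1,2,3) be continuous on [0,1]. For each i define hᵢ : ℝ → ℂ on [0,4] by hᵢ(t) = aᵢ(t) for t ∈ [0,1], hᵢ(t) = bᵢ(t−1) for t ∈ (1,2], hᵢ(t) = −aᵢ(3−t) for t ∈ (2,3], hᵢ(t) = −bᵢ(4−t) for t ∈ (3,4]. Write Aᵢ = ∫_0^1 aᵢ, Bᵢ = ∫_0^1 bᵢ, I_α(i,j) = ∫_{0 ≤ s ≤ t ≤ 1} aᵢ(s)aⱼ(t) ds dt and I_β(i,j) = ∫_{0 ≤ s ≤ t ≤ 1} bᵢ(s)bⱼ(t) ds dt. Then ∫_{0 ≤ t₁ ≤ t₂ ≤ t₃ ≤ 4} h₁(t₁)h₂(t₂)h₃(t₃) dt₁dt₂dt₃ = I_α(1,2)B₃ − I_β(1,2)A₃ + I_α(3,2)B₁ − I_β(3,2)A₁ − A₁B₂A₃ + B₁A₂B₃. -/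

import Mathlib

open MeasureTheory intervalIntegral Set

namespace CommAux

noncomputable def P (f : ℝ → ℂ) (t : ℝ) : ℂ := ∫ x in (0:ℝ)..t, f x

lemma primC {f : ℝ → ℂ} (hf : Continuous f) : Continuous (P f) :=
  intervalIntegral.continuous_primitive (fun a b => hf.intervalIntegrable a b) 0

lemma primD {f : ℝ → ℂ} (hf : Continuous f) (t : ℝ) :
    HasDerivAt (fun u => ∫ x in (0:ℝ)..u, f x) (f t) t :=
  integral_hasDerivAt_right (hf.intervalIntegrable _ _)
    (hf.stronglyMeasurable.stronglyMeasurableAtFilter) hf.continuousAt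

lemma P_add {f g : ℝ → ℂ} (hf : Continuous f) (hg : Continuous g) (u : ℝ) :
    P (fun x => f x + g x) u = P f u + P g u :=
  intervalIntegral.integral_add (hf.intervalIntegrable 0 u) (hg.intervalIntegrable 0 u)

lemma P_cmul (c : ℂ) (f : ℝ → ℂ) (u : ℝ) : P (fun x => c * f x) u = c * P f u :=
  intervalIntegral.integral_const_mul c f

lemma P_congr (f g : ℝ → ℂ) (e : ∀ x, f x = g x) (u : ℝ) : P f u = P g u :=
  intervalIntegral.integral_congr fun x _ => e x

lemma shuffleP {f g : ℝ → ℂ} (hf : Continuous f) (hg : Continuous g) :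
    P (fun u => P f u * g u) 1 + P (fun u => P g u * f u) 1 = P f 1 * P g 1 := by
  have hF : Continuous fun t => ∫ x in (0:ℝ)..t, f x := primC hf
  have hG : Continuous fun t => ∫ x in (0:ℝ)..t, g x := primC hg
  have hderiv : ∀ t ∈ uIcc (0:ℝ) 1,
      HasDerivAt (fun u => (∫ x in (0:ℝ)..u, f x) * (∫ x in (0:ℝ)..u, g x))
        (f t * (∫ x in (0:ℝ)..t, g x) + (∫ x in (0:ℝ)..t, f x) * g t) t :=
    fun t _ => (primD hf t).mul (primD hg t)
  have hint : IntervalIntegrable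
      (fun t => f t * (∫ x in (0:ℝ)..t, g x) + (∫ x in (0:ℝ)..t, f x) * g t) volume 0 1 :=
    ((hf.mul hG).add (hF.mul hg)).intervalIntegrable 0 1
  have key := intervalIntegral.integral_eq_sub_of_hasDerivAt hderiv hint
  rw [intervalIntegral.integral_add (f := fun t => f t * (∫ x in (0:ℝ)..t, g x))
      (g := fun t => (∫ x in (0:ℝ)..t, f x) * g t) ((hf.mul hG).intervalIntegrable 0 1)
      ((hF.mul hg).intervalIntegrable 0 1)] at key
  simp only [intervalIntegral.integral_same, mul_zero, zero_mul, sub_zero] at key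
  have comm : (∫ t in (0:ℝ)..1, f t * (∫ x in (0:ℝ)..t, g x))
      = ∫ t in (0:ℝ)..1, (∫ x in (0:ℝ)..t, g x) * f t :=
    intervalIntegral.integral_congr fun t _ => mul_comm _ _
  rw [comm] at key
  unfold P
  linear_combination key

lemma II_congr {g p : ℝ → ℂ} (hp : Continuous p) {u v : ℝ}
    (e : ∀ x ∈ uIoc u v, g x = p x) : IntervalIntegrable g volume u v := by
  rw [intervalIntegrable_iff]
  exact (intervalIntegrable_iff.1 (hp.intervalIntegrable u v)).congr_fun
    (fun x hx => (e x hx).symm) measurableSet_uIoc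

lemma prim_formula (g p q r s : ℝ → ℂ) (hp : Continuous p) (hq : Continuous q)
    (hr : Continuous r) (hs : Continuous s)
    (e1 : ∀ t ∈ Icc (0:ℝ) 1, g t = p t)
    (e2 : ∀ t ∈ Ioc (1:ℝ) 2, g t = q (t-1))
    (e3 : ∀ t ∈ Ioc (2:ℝ) 3, g t = r (3-t))
    (e4 : ∀ t ∈ Ioc (3:ℝ) 4, g t = s (4-t)) :
    (∀ t ∈ Icc (0:ℝ) 1, (∫ x in (0:ℝ)..t, g x) = ∫ x in (0:ℝ)..t, p x) ∧
    (∀ t ∈ Icc (1:ℝ) 2, (∫ x in (0:ℝ)..t, g x)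
        = (∫ x in (0:ℝ)..1, p x) + ∫ x in (0:ℝ)..(t-1), q x) ∧
    (∀ t ∈ Icc (2:ℝ) 3, (∫ x in (0:ℝ)..t, g x)
        = (∫ x in (0:ℝ)..1, p x) + (∫ x in (0:ℝ)..1, q x)
          + ((∫ x in (0:ℝ)..1, r x) - ∫ x in (0:ℝ)..(3-t), r x)) ∧
    (∀ t ∈ Icc (3:ℝ) 4, (∫ x in (0:ℝ)..t, g x)
        = (∫ x in (0:ℝ)..1, p x) + (∫ x in (0:ℝ)..1, q x) + (∫ x in (0:ℝ)..1, r x)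
          + ((∫ x in (0:ℝ)..1, s x) - ∫ x in (0:ℝ)..(4-t), s x)) := by
  have I1 : ∀ t ∈ Icc (0:ℝ) 1, IntervalIntegrable g volume 0 t := by
    intro t ht
    refine II_congr hp fun x hx => ?_
    rw [uIoc_of_le ht.1] at hx
    exact e1 x ⟨le_of_lt hx.1, hx.2.trans ht.2⟩
  have I2 : ∀ t ∈ Icc (1:ℝ) 2, IntervalIntegrable g volume 1 t := by
    intro t ht
    refine II_congr (p := fun x => q (x-1)) (hq.comp (continuous_id.sub continuous_const))
      fun x hx => ?_
    rw [uIoc_of_le ht.1] at hx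
    exact e2 x ⟨hx.1, hx.2.trans ht.2⟩
  have I3 : ∀ t ∈ Icc (2:ℝ) 3, IntervalIntegrable g volume 2 t := by
    intro t ht
    refine II_congr (p := fun x => r (3-x)) (hr.comp (continuous_const.sub continuous_id))
      fun x hx => ?_
    rw [uIoc_of_le ht.1] at hx
    exact e3 x ⟨hx.1, hx.2.trans ht.2⟩
  have I4 : ∀ t ∈ Icc (3:ℝ) 4, IntervalIntegrable g volume 3 t := by
    intro t ht
    refine II_congr (p := fun x => s (4-x)) (hs.comp (continuous_const.sub continuous_id))
      fun x hx => ?_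
    rw [uIoc_of_le ht.1] at hx
    exact e4 x ⟨hx.1, hx.2.trans ht.2⟩
  have P1 : ∀ t ∈ Icc (0:ℝ) 1, (∫ x in (0:ℝ)..t, g x) = ∫ x in (0:ℝ)..t, p x := by
    intro t ht
    refine intervalIntegral.integral_congr_ae (Filter.Eventually.of_forall fun x hx => ?_)
    rw [uIoc_of_le ht.1] at hx
    exact e1 x ⟨le_of_lt hx.1, hx.2.trans ht.2⟩
  have P2 : ∀ t ∈ Icc (1:ℝ) 2, (∫ x in (1:ℝ)..t, g x) = ∫ x in (0:ℝ)..(t-1), q x := by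
    intro t ht
    have e : (∫ x in (1:ℝ)..t, g x) = ∫ x in (1:ℝ)..t, q (x-1) := by
      refine intervalIntegral.integral_congr_ae (Filter.Eventually.of_forall fun x hx => ?_)
      rw [uIoc_of_le ht.1] at hx
      exact e2 x ⟨hx.1, hx.2.trans ht.2⟩
    rw [e, intervalIntegral.integral_comp_sub_right q 1]
    norm_num
  have P3 : ∀ t ∈ Icc (2:ℝ) 3, (∫ x in (2:ℝ)..t, g x)
      = (∫ x in (0:ℝ)..1, r x) - ∫ x in (0:ℝ)..(3-t), r x := by
    intro t ht
    have e : (∫ x in (2:ℝ)..t, g x) = ∫ x in (2:ℝ)..t, r (3-x) := by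
      refine intervalIntegral.integral_congr_ae (Filter.Eventually.of_forall fun x hx => ?_)
      rw [uIoc_of_le ht.1] at hx
      exact e3 x ⟨hx.1, hx.2.trans ht.2⟩
    rw [e, intervalIntegral.integral_comp_sub_left r 3,
      intervalIntegral.integral_interval_sub_left (hr.intervalIntegrable _ _)
        (hr.intervalIntegrable _ _)]
    norm_num
  have P4 : ∀ t ∈ Icc (3:ℝ) 4, (∫ x in (3:ℝ)..t, g x)
      = (∫ x in (0:ℝ)..1, s x) - ∫ x in (0:ℝ)..(4-t), s x := by
    intro t ht
    have e : (∫ x in (3:ℝ)..t, g x) = ∫ x in (3:ℝ)..t, s (4-x) := by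
      refine intervalIntegral.integral_congr_ae (Filter.Eventually.of_forall fun x hx => ?_)
      rw [uIoc_of_le ht.1] at hx
      exact e4 x ⟨hx.1, hx.2.trans ht.2⟩
    rw [e, intervalIntegral.integral_comp_sub_left s 4,
      intervalIntegral.integral_interval_sub_left (hs.intervalIntegrable _ _)
        (hs.intervalIntegrable _ _)]
    norm_num
  have m01 : (1:ℝ) ∈ Icc (0:ℝ) 1 := by norm_num
  have m12 : (2:ℝ) ∈ Icc (1:ℝ) 2 := by norm_num
  have m23 : (3:ℝ) ∈ Icc (2:ℝ) 3 := by norm_num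
  refine ⟨P1, fun t ht => ?_, fun t ht => ?_, fun t ht => ?_⟩
  · rw [← intervalIntegral.integral_add_adjacent_intervals (I1 1 m01) (I2 t ht),
      P1 1 m01, P2 t ht]
  · rw [← intervalIntegral.integral_add_adjacent_intervals
        ((I1 1 m01).trans (I2 2 m12)) (I3 t ht),
      ← intervalIntegral.integral_add_adjacent_intervals (I1 1 m01) (I2 2 m12),
      P1 1 m01, P2 2 m12, P3 t ht]
    norm_num
  · rw [← intervalIntegral.integral_add_adjacent_intervals
        (((I1 1 m01).trans (I2 2 m12)).trans (I3 3 m23)) (I4 t ht),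
      ← intervalIntegral.integral_add_adjacent_intervals
        ((I1 1 m01).trans (I2 2 m12)) (I3 3 m23),
      ← intervalIntegral.integral_add_adjacent_intervals (I1 1 m01) (I2 2 m12),
      P1 1 m01, P2 2 m12, P3 3 m23, P4 t ht]
    norm_num


theorem main_cont (a b h : Fin 3 → ℝ → ℂ)
    (ha : ∀ i, Continuous (a i)) (hb : ∀ i, Continuous (b i))
    (h1 : ∀ i, ∀ t ∈ Icc (0:ℝ) 1, h i t = a i t)
    (h2 : ∀ i, ∀ t ∈ Ioc (1:ℝ) 2, h i t = b i (t - 1))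
    (h3 : ∀ i, ∀ t ∈ Ioc (2:ℝ) 3, h i t = -a i (3 - t))
    (h4 : ∀ i, ∀ t ∈ Ioc (3:ℝ) 4, h i t = -b i (4 - t)) :
    (∫ t₃ in (0:ℝ)..4, ∫ t₂ in (0:ℝ)..t₃, ∫ t₁ in (0:ℝ)..t₂, h 0 t₁ * h 1 t₂ * h 2 t₃)
      = P (fun u => P (a 0) u * a 1 u) 1 * P (b 2) 1
        - P (fun u => P (b 0) u * b 1 u) 1 * P (a 2) 1
        + P (fun u => P (a 2) u * a 1 u) 1 * P (b 0) 1
        - P (fun u => P (b 2) u * b 1 u) 1 * P (a 0) 1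
        - P (a 0) 1 * P (b 1) 1 * P (a 2) 1
        + P (b 0) 1 * P (a 1) 1 * P (b 2) 1 := by
  have cPa : ∀ i, Continuous (P (a i)) := fun i => primC (ha i)
  have cPb : ∀ i, Continuous (P (b i)) := fun i => primC (hb i)
  -- Stage 1: the primitive of h 0
  obtain ⟨F1, F2, F3, F4⟩ :=
    prim_formula (h 0) (a 0) (b 0) (fun u => -a 0 u) (fun u => -b 0 u)
      (ha 0) (hb 0) (ha 0).neg (hb 0).neg (h1 0) (h2 0)
      (fun t ht => h3 0 t ht) (fun t ht => h4 0 t ht)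
  have Fa1 : ∀ t ∈ Icc (0:ℝ) 1, P (h 0) t = P (a 0) t := fun t ht => F1 t ht
  have Fa2 : ∀ t ∈ Icc (1:ℝ) 2, P (h 0) t = P (a 0) 1 + P (b 0) (t-1) := fun t ht => F2 t ht
  have Fa3 : ∀ t ∈ Icc (2:ℝ) 3, P (h 0) t = P (b 0) 1 + P (a 0) (3-t) := by
    intro t ht
    have e := F3 t ht
    simp only [intervalIntegral.integral_neg] at e
    show (∫ x in (0:ℝ)..t, h 0 x) = _
    rw [e]; unfold P; ring
  have Fa4 : ∀ t ∈ Icc (3:ℝ) 4, P (h 0) t = P (b 0) (4-t) := by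
    intro t ht
    have e := F4 t ht
    simp only [intervalIntegral.integral_neg] at e
    show (∫ x in (0:ℝ)..t, h 0 x) = _
    rw [e]; unfold P; ring
  -- Stage 2: the primitive of (P (h 0)) * h 1
  have cp2 : Continuous (fun x => P (a 0) x * a 1 x) := (cPa 0).mul (ha 1)
  have cqb2 : Continuous (fun x => P (b 0) x * b 1 x) := (cPb 0).mul (hb 1)
  have cq2 : Continuous (fun x => (P (a 0) 1 + P (b 0) x) * b 1 x) :=
    (continuous_const.add (cPb 0)).mul (hb 1)
  have cr2 : Continuous (fun x => (P (b 0) 1 + P (a 0) x) * -a 1 x) :=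
    (continuous_const.add (cPa 0)).mul (ha 1).neg
  have cs2 : Continuous (fun x => P (b 0) x * -b 1 x) := (cPb 0).mul (hb 1).neg
  obtain ⟨G1, G2, G3, G4⟩ :=
    prim_formula (fun t => P (h 0) t * h 1 t)
      (fun u => P (a 0) u * a 1 u)
      (fun u => (P (a 0) 1 + P (b 0) u) * b 1 u)
      (fun u => (P (b 0) 1 + P (a 0) u) * -a 1 u)
      (fun u => P (b 0) u * -b 1 u)
      cp2 cq2 cr2 cs2
      (fun t ht => by show P (h 0) t * h 1 t = P (a 0) t * a 1 t
                      rw [Fa1 t ht, h1 1 t ht])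
      (fun t ht => by show P (h 0) t * h 1 t = (P (a 0) 1 + P (b 0) (t-1)) * b 1 (t-1)
                      rw [Fa2 t (Ioc_subset_Icc_self ht), h2 1 t ht])
      (fun t ht => by show P (h 0) t * h 1 t = (P (b 0) 1 + P (a 0) (3-t)) * -a 1 (3-t)
                      rw [Fa3 t (Ioc_subset_Icc_self ht), h3 1 t ht])
      (fun t ht => by show P (h 0) t * h 1 t = P (b 0) (4-t) * -b 1 (4-t)
                      rw [Fa4 t (Ioc_subset_Icc_self ht), h4 1 t ht])
  have Gb1 : ∀ t ∈ Icc (0:ℝ) 1, P (fun t' => P (h 0) t' * h 1 t') t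
      = P (fun u => P (a 0) u * a 1 u) t := fun t ht => G1 t ht
  have Gb2 : ∀ t ∈ Icc (1:ℝ) 2, P (fun t' => P (h 0) t' * h 1 t') t
      = P (fun u => P (a 0) u * a 1 u) 1
        + P (fun u => (P (a 0) 1 + P (b 0) u) * b 1 u) (t-1) := fun t ht => G2 t ht
  have Gb3 : ∀ t ∈ Icc (2:ℝ) 3, P (fun t' => P (h 0) t' * h 1 t') t
      = P (fun u => P (a 0) u * a 1 u) 1
        + P (fun u => (P (a 0) 1 + P (b 0) u) * b 1 u) 1
        + (P (fun u => (P (b 0) 1 + P (a 0) u) * -a 1 u) 1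
           - P (fun u => (P (b 0) 1 + P (a 0) u) * -a 1 u) (3-t)) := fun t ht => G3 t ht
  have Gb4 : ∀ t ∈ Icc (3:ℝ) 4, P (fun t' => P (h 0) t' * h 1 t') t
      = P (fun u => P (a 0) u * a 1 u) 1
        + P (fun u => (P (a 0) 1 + P (b 0) u) * b 1 u) 1
        + P (fun u => (P (b 0) 1 + P (a 0) u) * -a 1 u) 1
        + (P (fun u => P (b 0) u * -b 1 u) 1
           - P (fun u => P (b 0) u * -b 1 u) (4-t)) := fun t ht => G4 t ht
  -- explicit formulas for stage-2 primitives
  have hq2 : ∀ u : ℝ, P (fun x => (P (a 0) 1 + P (b 0) x) * b 1 x) u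
      = P (a 0) 1 * P (b 1) u + P (fun x => P (b 0) x * b 1 x) u := by
    intro u
    rw [P_congr (fun x => (P (a 0) 1 + P (b 0) x) * b 1 x)
        (fun x => P (a 0) 1 * b 1 x + P (b 0) x * b 1 x) (fun x => by ring) u,
      P_add (f := fun x => P (a 0) 1 * b 1 x) (continuous_const.mul (hb 1)) cqb2 u, P_cmul]
  have hr2 : ∀ u : ℝ, P (fun x => (P (b 0) 1 + P (a 0) x) * -a 1 x) u
      = -(P (b 0) 1 * P (a 1) u) - P (fun x => P (a 0) x * a 1 x) u := by
    intro u
    rw [P_congr (fun x => (P (b 0) 1 + P (a 0) x) * -a 1 x)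
        (fun x => (-(P (b 0) 1)) * a 1 x + (-1:ℂ) * (P (a 0) x * a 1 x)) (fun x => by ring) u,
      P_add (f := fun x => (-(P (b 0) 1)) * a 1 x) (g := fun x => (-1:ℂ) * (P (a 0) x * a 1 x)) (continuous_const.mul (ha 1)) (continuous_const.mul cp2) u, P_cmul, P_cmul]
    ring
  have hs2 : ∀ u : ℝ, P (fun x => P (b 0) x * -b 1 x) u
      = -P (fun x => P (b 0) x * b 1 x) u := by
    intro u
    rw [P_congr (fun x => P (b 0) x * -b 1 x)
        (fun x => (-1:ℂ) * (P (b 0) x * b 1 x)) (fun x => by ring) u, P_cmul]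
    ring
  -- Stage 3: the primitive of (P g2) * h 2
  obtain ⟨H1, H2, H3, H4⟩ :=
    prim_formula (fun t => P (fun t' => P (h 0) t' * h 1 t') t * h 2 t)
      (fun u => P (fun x => P (a 0) x * a 1 x) u * a 2 u)
      (fun u => (P (fun x => P (a 0) x * a 1 x) 1
          + P (fun x => (P (a 0) 1 + P (b 0) x) * b 1 x) u) * b 2 u)
      (fun u => (P (fun x => P (a 0) x * a 1 x) 1
          + P (fun x => (P (a 0) 1 + P (b 0) x) * b 1 x) 1
          + (P (fun x => (P (b 0) 1 + P (a 0) x) * -a 1 x) 1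
             - P (fun x => (P (b 0) 1 + P (a 0) x) * -a 1 x) u)) * -a 2 u)
      (fun u => (P (fun x => P (a 0) x * a 1 x) 1
          + P (fun x => (P (a 0) 1 + P (b 0) x) * b 1 x) 1
          + P (fun x => (P (b 0) 1 + P (a 0) x) * -a 1 x) 1
          + (P (fun x => P (b 0) x * -b 1 x) 1
             - P (fun x => P (b 0) x * -b 1 x) u)) * -b 2 u)
      ((primC cp2).mul (ha 2))
      ((continuous_const.add (primC cq2)).mul (hb 2))
      ((continuous_const.add (continuous_const.sub (primC cr2))).mul (ha 2).neg)
      ((continuous_const.add (continuous_const.sub (primC cs2))).mul (hb 2).neg)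
      (fun t ht => by
        show P (fun t' => P (h 0) t' * h 1 t') t * h 2 t = _
        rw [Gb1 t ht, h1 2 t ht])
      (fun t ht => by
        show P (fun t' => P (h 0) t' * h 1 t') t * h 2 t = _
        rw [Gb2 t (Ioc_subset_Icc_self ht), h2 2 t ht])
      (fun t ht => by
        show P (fun t' => P (h 0) t' * h 1 t') t * h 2 t = _
        rw [Gb3 t (Ioc_subset_Icc_self ht), h3 2 t ht])
      (fun t ht => by
        show P (fun t' => P (h 0) t' * h 1 t') t * h 2 t = _
        rw [Gb4 t (Ioc_subset_Icc_self ht), h4 2 t ht])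
  -- total value of the outermost primitive at 4
  have Htot := H4 4 ⟨by norm_num, le_rfl⟩
  rw [show (4:ℝ)-4 = 0 by norm_num, intervalIntegral.integral_same, sub_zero] at Htot
  -- reduce the triple iterated integral
  have L0 : (∫ t₃ in (0:ℝ)..4, ∫ t₂ in (0:ℝ)..t₃, ∫ t₁ in (0:ℝ)..t₂, h 0 t₁ * h 1 t₂ * h 2 t₃)
      = ∫ t in (0:ℝ)..4, P (fun t' => P (h 0) t' * h 1 t') t * h 2 t := by
    refine intervalIntegral.integral_congr fun t3 _ => ?_
    have inner : ∀ t2 : ℝ, (∫ t₁ in (0:ℝ)..t2, h 0 t₁ * h 1 t2 * h 2 t3)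
        = P (h 0) t2 * h 1 t2 * h 2 t3 := by
      intro t2
      have e : (∫ t₁ in (0:ℝ)..t2, h 0 t₁ * h 1 t2 * h 2 t3)
          = ∫ t₁ in (0:ℝ)..t2, h 0 t₁ * (h 1 t2 * h 2 t3) :=
        intervalIntegral.integral_congr fun x _ => by ring
      rw [e, intervalIntegral.integral_mul_const]
      unfold P; ring
    calc (∫ t₂ in (0:ℝ)..t3, ∫ t₁ in (0:ℝ)..t₂, h 0 t₁ * h 1 t₂ * h 2 t3)
        = ∫ t₂ in (0:ℝ)..t3, P (h 0) t₂ * h 1 t₂ * h 2 t3 :=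
          intervalIntegral.integral_congr fun t2 _ => inner t2
      _ = (∫ t₂ in (0:ℝ)..t3, P (h 0) t₂ * h 1 t₂) * h 2 t3 :=
          intervalIntegral.integral_mul_const _ _
      _ = P (fun t' => P (h 0) t' * h 1 t') t3 * h 2 t3 := rfl
  rw [L0, Htot]
  show P (fun u => P (fun x => P (a 0) x * a 1 x) u * a 2 u) 1 + P (fun u => (P (fun x => P (a 0) x * a 1 x) 1 + P (fun x => (P (a 0) 1 + P (b 0) x) * b 1 x) u) * b 2 u) 1 + P (fun u => (P (fun x => P (a 0) x * a 1 x) 1 + P (fun x => (P (a 0) 1 + P (b 0) x) * b 1 x) 1 + (P (fun x => (P (b 0) 1 + P (a 0) x) * -a 1 x) 1 - P (fun x => (P (b 0) 1 + P (a 0) x) * -a 1 x) u)) * -a 2 u) 1 + P (fun u => (P (fun x => P (a 0) x * a 1 x) 1 + P (fun x => (P (a 0) 1 + P (b 0) x) * b 1 x) 1 + P (fun x => (P (b 0) 1 + P (a 0) x) * -a 1 x) 1 + (P (fun x => P (b 0) x * -b 1 x) 1 - P (fun x => P (b 0) x * -b 1 x) u)) * -b 2 u) 1 = _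
  have hPq3 : P (fun u => (P (fun x => P (a 0) x * a 1 x) 1 + P (fun x => (P (a 0) 1 + P (b 0) x) * b 1 x) u) * b 2 u) 1
      = P (fun x => P (a 0) x * a 1 x) 1 * P (b 2) 1
        + (P (a 0) 1 * P (fun u => P (b 1) u * b 2 u) 1
           + P (fun u => P (fun x => P (b 0) x * b 1 x) u * b 2 u) 1) := by
    rw [P_congr (fun u => (P (fun x => P (a 0) x * a 1 x) 1 + P (fun x => (P (a 0) 1 + P (b 0) x) * b 1 x) u) * b 2 u)
        (fun u => P (fun x => P (a 0) x * a 1 x) 1 * b 2 u + P (fun x => (P (a 0) 1 + P (b 0) x) * b 1 x) u * b 2 u) (fun u => by ring) 1,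
      P_add (f := fun u => P (fun x => P (a 0) x * a 1 x) 1 * b 2 u) (g := fun u => P (fun x => (P (a 0) 1 + P (b 0) x) * b 1 x) u * b 2 u) (continuous_const.mul (hb 2)) ((primC cq2).mul (hb 2)) 1, P_cmul,
      P_congr (fun u => P (fun x => (P (a 0) 1 + P (b 0) x) * b 1 x) u * b 2 u)
        (fun u => P (a 0) 1 * (P (b 1) u * b 2 u) + P (fun x => P (b 0) x * b 1 x) u * b 2 u)
        (fun u => by beta_reduce; rw [hq2 u]; ring) 1,
      P_add (f := fun u => P (a 0) 1 * (P (b 1) u * b 2 u)) (g := fun u => P (fun x => P (b 0) x * b 1 x) u * b 2 u) (continuous_const.mul ((primC (hb 1)).mul (hb 2))) ((primC cqb2).mul (hb 2)) 1,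
      P_cmul]
  have hPr3 : P (fun u => (P (fun x => P (a 0) x * a 1 x) 1 + P (fun x => (P (a 0) 1 + P (b 0) x) * b 1 x) 1 + (P (fun x => (P (b 0) 1 + P (a 0) x) * -a 1 x) 1 - P (fun x => (P (b 0) 1 + P (a 0) x) * -a 1 x) u)) * -a 2 u) 1
      = (-(P (fun x => P (a 0) x * a 1 x) 1 + P (fun x => (P (a 0) 1 + P (b 0) x) * b 1 x) 1 + P (fun x => (P (b 0) 1 + P (a 0) x) * -a 1 x) 1)) * P (a 2) 1
        + ((-(P (b 0) 1)) * P (fun u => P (a 1) u * a 2 u) 1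
           + (-1:ℂ) * P (fun u => P (fun x => P (a 0) x * a 1 x) u * a 2 u) 1) := by
    rw [P_congr (fun u => (P (fun x => P (a 0) x * a 1 x) 1 + P (fun x => (P (a 0) 1 + P (b 0) x) * b 1 x) 1 + (P (fun x => (P (b 0) 1 + P (a 0) x) * -a 1 x) 1 - P (fun x => (P (b 0) 1 + P (a 0) x) * -a 1 x) u)) * -a 2 u)
        (fun u => (-(P (fun x => P (a 0) x * a 1 x) 1 + P (fun x => (P (a 0) 1 + P (b 0) x) * b 1 x) 1 + P (fun x => (P (b 0) 1 + P (a 0) x) * -a 1 x) 1)) * a 2 u + P (fun x => (P (b 0) 1 + P (a 0) x) * -a 1 x) u * a 2 u)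
        (fun u => by ring) 1,
      P_add (f := fun u => (-(P (fun x => P (a 0) x * a 1 x) 1 + P (fun x => (P (a 0) 1 + P (b 0) x) * b 1 x) 1 + P (fun x => (P (b 0) 1 + P (a 0) x) * -a 1 x) 1)) * a 2 u) (g := fun u => P (fun x => (P (b 0) 1 + P (a 0) x) * -a 1 x) u * a 2 u) (continuous_const.mul (ha 2)) ((primC cr2).mul (ha 2)) 1, P_cmul,
      P_congr (fun u => P (fun x => (P (b 0) 1 + P (a 0) x) * -a 1 x) u * a 2 u)
        (fun u => (-(P (b 0) 1)) * (P (a 1) u * a 2 u) + (-1:ℂ) * (P (fun x => P (a 0) x * a 1 x) u * a 2 u))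
        (fun u => by beta_reduce; rw [hr2 u]; ring) 1,
      P_add (f := fun u => (-(P (b 0) 1)) * (P (a 1) u * a 2 u)) (g := fun u => (-1:ℂ) * (P (fun x => P (a 0) x * a 1 x) u * a 2 u)) (continuous_const.mul ((primC (ha 1)).mul (ha 2)))
        (continuous_const.mul ((primC cp2).mul (ha 2))) 1,
      P_cmul, P_cmul]
  have hPs3 : P (fun u => (P (fun x => P (a 0) x * a 1 x) 1 + P (fun x => (P (a 0) 1 + P (b 0) x) * b 1 x) 1 + P (fun x => (P (b 0) 1 + P (a 0) x) * -a 1 x) 1 + (P (fun x => P (b 0) x * -b 1 x) 1 - P (fun x => P (b 0) x * -b 1 x) u)) * -b 2 u) 1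
      = (-(P (fun x => P (a 0) x * a 1 x) 1 + P (fun x => (P (a 0) 1 + P (b 0) x) * b 1 x) 1 + P (fun x => (P (b 0) 1 + P (a 0) x) * -a 1 x) 1 + P (fun x => P (b 0) x * -b 1 x) 1)) * P (b 2) 1
        + (-1:ℂ) * P (fun u => P (fun x => P (b 0) x * b 1 x) u * b 2 u) 1 := by
    rw [P_congr (fun u => (P (fun x => P (a 0) x * a 1 x) 1 + P (fun x => (P (a 0) 1 + P (b 0) x) * b 1 x) 1 + P (fun x => (P (b 0) 1 + P (a 0) x) * -a 1 x) 1 + (P (fun x => P (b 0) x * -b 1 x) 1 - P (fun x => P (b 0) x * -b 1 x) u)) * -b 2 u)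
        (fun u => (-(P (fun x => P (a 0) x * a 1 x) 1 + P (fun x => (P (a 0) 1 + P (b 0) x) * b 1 x) 1 + P (fun x => (P (b 0) 1 + P (a 0) x) * -a 1 x) 1 + P (fun x => P (b 0) x * -b 1 x) 1)) * b 2 u + P (fun x => P (b 0) x * -b 1 x) u * b 2 u)
        (fun u => by ring) 1,
      P_add (f := fun u => (-(P (fun x => P (a 0) x * a 1 x) 1 + P (fun x => (P (a 0) 1 + P (b 0) x) * b 1 x) 1 + P (fun x => (P (b 0) 1 + P (a 0) x) * -a 1 x) 1 + P (fun x => P (b 0) x * -b 1 x) 1)) * b 2 u) (g := fun u => P (fun x => P (b 0) x * -b 1 x) u * b 2 u) (continuous_const.mul (hb 2)) ((primC cs2).mul (hb 2)) 1, P_cmul,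
      P_congr (fun u => P (fun x => P (b 0) x * -b 1 x) u * b 2 u)
        (fun u => (-1:ℂ) * (P (fun x => P (b 0) x * b 1 x) u * b 2 u))
        (fun u => by beta_reduce; rw [hs2 u]; ring) 1,
      P_cmul]
  rw [hPq3, hPr3, hPs3]
  have S1 := shuffleP (hb 1) (hb 2)
  have S2 := shuffleP (ha 1) (ha 2)
  linear_combination (P (a 0) 1) * S1 - (P (b 0) 1) * S2
    + (-(P (a 2) 1) - P (b 2) 1) * (hq2 1) + (-(P (a 2) 1) - P (b 2) 1) * (hr2 1)
    + (-(P (b 2) 1)) * (hs2 1)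



lemma clamp_mem (x : ℝ) : min (max x 0) 1 ∈ Icc (0:ℝ) 1 :=
  ⟨le_min (le_max_right x 0) zero_le_one, min_le_right _ _⟩

lemma clamp_eq {x : ℝ} (hx : x ∈ Icc (0:ℝ) 1) : min (max x 0) 1 = x := by
  rw [max_eq_left hx.1, min_eq_left hx.2]

lemma clamp_cont : Continuous fun x : ℝ => min (max x 0) 1 :=
  (continuous_id.max continuous_const).min continuous_const

end CommAux

open CommAux Set in
/-- Lemma 5.7(c)/3.26(c): the triple iterated integral over the commutator loop
`[α,β] = αβα⁻¹β⁻¹`.  Here `a i`, `b i` are the pullbacks of `ωᵢ` along `α`, `β`,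
and `h i` is the pullback along `[α,β]`, given piecewise on `[0,4]`. -/
theorem triple_iterated_integral_over_commutator
    (a b h : Fin 3 → ℝ → ℂ)
    (ha : ∀ i, ContinuousOn (a i) (Set.Icc 0 1))
    (hb : ∀ i, ContinuousOn (b i) (Set.Icc 0 1))
    (h1 : ∀ i, ∀ t ∈ Set.Icc (0:ℝ) 1, h i t = a i t)
    (h2 : ∀ i, ∀ t ∈ Set.Ioc (1:ℝ) 2, h i t = b i (t - 1))
    (h3 : ∀ i, ∀ t ∈ Set.Ioc (2:ℝ) 3, h i t = -a i (3 - t))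
    (h4 : ∀ i, ∀ t ∈ Set.Ioc (3:ℝ) 4, h i t = -b i (4 - t)) :
    (∫ t₃ in (0:ℝ)..4, ∫ t₂ in (0:ℝ)..t₃, ∫ t₁ in (0:ℝ)..t₂, h 0 t₁ * h 1 t₂ * h 2 t₃)
      = (∫ t in (0:ℝ)..1, ∫ s in (0:ℝ)..t, a 0 s * a 1 t) * (∫ t in (0:ℝ)..1, b 2 t)
        - (∫ t in (0:ℝ)..1, ∫ s in (0:ℝ)..t, b 0 s * b 1 t) * (∫ t in (0:ℝ)..1, a 2 t)
        + (∫ t in (0:ℝ)..1, ∫ s in (0:ℝ)..t, a 2 s * a 1 t) * (∫ t in (0:ℝ)..1, b 0 t)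
        - (∫ t in (0:ℝ)..1, ∫ s in (0:ℝ)..t, b 2 s * b 1 t) * (∫ t in (0:ℝ)..1, a 0 t)
        - (∫ t in (0:ℝ)..1, a 0 t) * (∫ t in (0:ℝ)..1, b 1 t) * (∫ t in (0:ℝ)..1, a 2 t)
        + (∫ t in (0:ℝ)..1, b 0 t) * (∫ t in (0:ℝ)..1, a 1 t) * (∫ t in (0:ℝ)..1, b 2 t) := by
  have key := main_cont (fun i x => a i (min (max x 0) 1)) (fun i x => b i (min (max x 0) 1)) h
    (fun i => (ha i).comp_continuous clamp_cont clamp_mem)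
    (fun i => (hb i).comp_continuous clamp_cont clamp_mem)
    (fun i t ht => by beta_reduce; rw [h1 i t ht, clamp_eq ht])
    (fun i t ht => by
      beta_reduce; rw [h2 i t ht, clamp_eq (x := t - 1) ⟨by linarith [ht.1], by linarith [ht.2]⟩])
    (fun i t ht => by
      beta_reduce; rw [h3 i t ht, clamp_eq (x := 3 - t) ⟨by linarith [ht.2], by linarith [ht.1]⟩])
    (fun i t ht => by
      beta_reduce; rw [h4 i t ht, clamp_eq (x := 4 - t) ⟨by linarith [ht.2], by linarith [ht.1]⟩])
  rw [key]
  have ePs : ∀ f : ℝ → ℂ, P (fun x => f (min (max x 0) 1)) 1 = ∫ t in (0:ℝ)..1, f t := by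
    intro f
    refine intervalIntegral.integral_congr fun x hx => ?_
    rw [uIcc_of_le zero_le_one] at hx
    rw [clamp_eq hx]
  have eJ : ∀ f g : ℝ → ℂ,
      P (fun u => P (fun x => f (min (max x 0) 1)) u * g (min (max u 0) 1)) 1
        = ∫ t in (0:ℝ)..1, ∫ s in (0:ℝ)..t, f s * g t := by
    intro f g
    refine intervalIntegral.integral_congr fun t ht => ?_
    rw [uIcc_of_le zero_le_one] at ht
    rw [clamp_eq ht,
      show (∫ s in (0:ℝ)..t, f s * g t) = (∫ s in (0:ℝ)..t, f s) * g t from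
        intervalIntegral.integral_mul_const _ _]
    congr 1
    refine intervalIntegral.integral_congr fun s hs => ?_
    rw [uIcc_of_le ht.1] at hs
    rw [clamp_eq ⟨hs.1, hs.2.trans ht.2⟩]
  rw [eJ (a 0) (a 1), eJ (b 0) (b 1), eJ (a 2) (a 1), eJ (b 2) (b 1),
    ePs (a 0), ePs (a 1), ePs (a 2), ePs (b 0), ePs (b 1), ePs (b 2)]
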